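/- Let L = (L₁,…,L₅) ∈ ℝ⁵. Then L satisfies L₁ = L₂ + (2√3 − 3)L₄, L₂ = L₃, L₄ = L₅ and L₂ > L₄ > 0 if and only if there exist real numbers δ, ε with ε > (3 + 2√3)δ > 0 such that L = δ·v_III + ε·v_II. (Equivalence of statements (ii) and (iii) of Lemma 3.) -/

import Mathlib

noncomputable def vIII : EuclideanSpace ℝ (Fin 5) :=
  WithLp.toLp 2 ![2, 5, 5, -(3 + 2 * Real.sqrt 3), -(3 + 2 * Real.sqrt 3)]

noncomputable def vII : EuclideanSpace ℝ (Fin 5) :=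
  WithLp.toLp 2 ![2 * (Real.sqrt 3 - 1), 1, 1, 1, 1]

theorem lemma3_ii_iff_iii (L : EuclideanSpace ℝ (Fin 5)) :
    (L 0 = L 1 + (2 * Real.sqrt 3 - 3) * L 3 ∧ L 1 = L 2 ∧ L 3 = L 4 ∧
      L 1 > L 3 ∧ L 3 > 0) ↔
    (∃ δ ε : ℝ, ε > (3 + 2 * Real.sqrt 3) * δ ∧ (3 + 2 * Real.sqrt 3) * δ > 0 ∧
      L = δ • vIII + ε • vII) := by
  have hs : Real.sqrt 3 ^ 2 = 3 := Real.sq_sqrt (by norm_num)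
  have hs1 : (1:ℝ) < Real.sqrt 3 := by
    nlinarith [Real.sqrt_nonneg 3]
  set s := Real.sqrt 3 with hsdef
  constructor
  · rintro ⟨h0, h12, h34, h13, h3⟩
    refine ⟨(L 1 - L 3) / (8 + 2 * s), L 3 + (3 + 2 * s) * ((L 1 - L 3) / (8 + 2 * s)), ?_, ?_, ?_⟩
    · nlinarith
    · have hd : (L 1 - L 3) / (8 + 2 * s) > 0 :=
        div_pos (by linarith) (by nlinarith)
      nlinarith
    · have h8 : (8 + 2 * s) ≠ 0 := by nlinarith
      ext i
      fin_cases i <;>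
        simp [vIII, vII, EuclideanSpace, PiLp.add_apply, PiLp.smul_apply, smul_eq_mul] <;>
        field_simp <;> nlinarith
  · rintro ⟨δ, ε, h1, h2, rfl⟩
    have hδ : δ > 0 := by nlinarith
    simp only [vIII, vII, PiLp.add_apply, PiLp.smul_apply, smul_eq_mul,
      Matrix.cons_val_zero, Matrix.cons_val_one, Matrix.head_cons]
    norm_num [Fin.isValue, Matrix.cons_val_fin_one, Matrix.cons_val, Matrix.cons_val_two,
      Matrix.cons_val_three, Matrix.cons_val_four, Matrix.tail_cons, ← hsdef]
    repeat' apply And.intro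
    all_goals nlinarith
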